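/- Let n and m be positive integers, let F be the finite field with 2^m elements, and let D_{2n} be the dihedral group of order 4n (the symmetry group of a regular 2n-gon, generated by r, s with r^{2n} = s² = (rs)² = 1). Then the F-vector space Inn(F[D_{2n}]) of inner derivations of the group algebra F[D_{2n}] has dimension 3n − 3. -/

import Mathlib

open MonoidAlgebra

/-- The A-submodule of inner derivations of the group ring `A[G]`, inside the
`A`-module of all `A`-linear endomorphisms of `A[G]`. -/
def innDer (A G : Type) [CommRing A] [Group G] :
    Submodule A (MonoidAlgebra A G →ₗ[A] MonoidAlgebra A G) where
  carrier := {d | ∃ a : MonoidAlgebra A G, ∀ x : MonoidAlgebra A G, d x = a * x - x * a}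
  add_mem' := by
    rintro d e ⟨a, ha⟩ ⟨b, hb⟩
    refine ⟨a + b, fun x => ?_⟩
    simp only [LinearMap.add_apply, ha x, hb x, add_mul, mul_add]
    abel
  zero_mem' := ⟨0, fun x => by simp⟩
  smul_mem' := by
    rintro c d ⟨a, ha⟩
    refine ⟨c • a, fun x => ?_⟩
    simp only [LinearMap.smul_apply, ha x, smul_sub, smul_mul_assoc, mul_smul_comm]

section Ad

variable (F : Type) [Field F] (G : Type) [Group G]

/-- The adjoint map `a ↦ (x ↦ a * x - x * a)`. -/
noncomputable def adMap : MonoidAlgebra F G →ₗ[F] (MonoidAlgebra F G →ₗ[F] MonoidAlgebra F G) :=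
  LinearMap.mul F (MonoidAlgebra F G) - (LinearMap.mul F (MonoidAlgebra F G)).flip

lemma adMap_apply (a x : MonoidAlgebra F G) : adMap F G a x = a * x - x * a := rfl

lemma innDer_eq_range : innDer F G = LinearMap.range (adMap F G) := by
  ext d
  constructor
  · rintro ⟨a, ha⟩
    exact ⟨a, LinearMap.ext fun x => (ha x).symm⟩
  · rintro ⟨a, rfl⟩
    exact ⟨a, fun x => rfl⟩

lemma mem_ker_adMap (a : MonoidAlgebra F G) :
    a ∈ LinearMap.ker (adMap F G) ↔ ∀ x y : G, a.coeff (x * y) = a.coeff (y * x) := by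
  constructor
  · intro h x y
    have h1 : a * single x (1:F) = single x (1:F) * a := by
      have := LinearMap.congr_fun (LinearMap.mem_ker.mp h) (single x 1)
      rw [adMap_apply] at this
      simpa [sub_eq_zero] using this
    have h2 := Finsupp.ext_iff.mp (congrArg MonoidAlgebra.coeff h1) (x * y * x)
    simp only [mul_single_apply, single_mul_apply, one_mul, mul_one] at h2
    rw [show x⁻¹ * (x * y * x) = y * x by group] at h2
    simpa using h2
  · intro h
    rw [LinearMap.mem_ker]
    refine LinearMap.ext fun x => ?_
    rw [adMap_apply, LinearMap.zero_apply, sub_eq_zero]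
    induction x using MonoidAlgebra.induction with
    | zero => simp
    | single_add g r x hg hr ih =>
      rw [mul_add, add_mul, ih]
      congr 1
      ext y
      rw [mul_single_apply, single_mul_apply, mul_comm]
      congr 1
      have := h g⁻¹ y
      group at this ⊢
      rw [this]

end Ad

open DihedralGroup

instance twoMulNeZero (n : ℕ) [NeZero n] : NeZero (2 * n) :=
  ⟨by have := NeZero.ne n; omega⟩

/-- Conjugacy class index of an element of `DihedralGroup (2*n)`. -/
def dInd (n : ℕ) : DihedralGroup (2 * n) → Fin (n + 3)
  | .r i => ⟨min i.val (2 * n - i.val), by omega⟩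
  | .sr i => if i.val % 2 = 0 then ⟨n + 1, by omega⟩ else ⟨n + 2, by omega⟩

/-- A representative of each conjugacy class. -/
def dRep (n : ℕ) (j : Fin (n + 3)) : DihedralGroup (2 * n) :=
  if (j : ℕ) = n + 1 then .sr 0 else if (j : ℕ) = n + 2 then .sr 1 else .r (j : ℕ)

lemma zmod_parity (n : ℕ) [NeZero n] (i j : ZMod (2 * n)) :
    (j - i).val % 2 = (j + i).val % 2 := by
  have hi := ZMod.val_lt i
  have hj := ZMod.val_lt j
  rw [sub_eq_add_neg, ZMod.val_add, ZMod.val_add, ZMod.neg_val]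
  rw [Nat.mod_mod_of_dvd _ ⟨n, rfl⟩, Nat.mod_mod_of_dvd _ ⟨n, rfl⟩]
  split <;> rename_i hz
  · simp [hz]
  · have : i.val ≠ 0 := fun h => hz ((ZMod.val_eq_zero i).mp h)
    omega

lemma min_neg_val (n : ℕ) [NeZero n] (i : ZMod (2 * n)) :
    min (-i).val (2 * n - (-i).val) = min i.val (2 * n - i.val) := by
  have hi := ZMod.val_lt i
  rw [ZMod.neg_val]
  split <;> rename_i hz
  · simp [hz]
  · have : i.val ≠ 0 := fun h => hz ((ZMod.val_eq_zero i).mp h)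
    omega

lemma dInd_mul_comm (n : ℕ) [NeZero n] (x y : DihedralGroup (2 * n)) :
    dInd n (x * y) = dInd n (y * x) := by
  rcases x with i | i <;> rcases y with j | j
  · exact congrArg (dInd n) (congrArg DihedralGroup.r (add_comm i j))
  · rw [r_mul_sr, sr_mul_r, dInd, dInd]
    simp only [zmod_parity n i j, add_comm]
  · rw [r_mul_sr, sr_mul_r, dInd, dInd]
    simp only [zmod_parity n j i, add_comm]
  · rw [sr_mul_sr, sr_mul_sr, dInd, dInd]
    have : i - j = -(j - i) := by ring
    rw [this]
    exact Fin.ext (min_neg_val n (j - i)).symm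

lemma dInd_dRep (n : ℕ) [NeZero n] (j : Fin (n + 3)) : dInd n (dRep n j) = j := by
  have hn : 1 ≤ n := Nat.one_le_iff_ne_zero.mpr (NeZero.ne n)
  rw [dRep]
  split <;> rename_i h1
  · rw [dInd]
    simp only [ZMod.val_zero, Nat.zero_mod, if_pos rfl]
    exact Fin.ext h1.symm
  · split <;> rename_i h2
    · rw [dInd]
      have hv : (1 : ZMod (2 * n)).val = 1 := by
        haveI : Fact (1 < 2 * n) := ⟨by omega⟩
        exact ZMod.val_one _
      rw [hv, if_neg (by norm_num)]
      exact Fin.ext h2.symm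
    · have hj : (j : ℕ) ≤ n := by have := j.isLt; omega
      rw [dInd]
      have hv : ((j : ℕ) : ZMod (2 * n)).val = (j : ℕ) :=
        ZMod.val_cast_of_lt (by omega)
      exact Fin.ext (by simp only [hv]; omega)

lemma a_rep_ind {n : ℕ} [NeZero n] {F : Type} [Field F]
    (a : MonoidAlgebra F (DihedralGroup (2 * n)))
    (h : ∀ x y : DihedralGroup (2 * n), a.coeff (x * y) = a.coeff (y * x))
    (g : DihedralGroup (2 * n)) :
    a.coeff (dRep n (dInd n g)) = a.coeff g := by
  have hcast : ∀ c : ZMod (2 * n), ((c.val : ℕ) : ZMod (2 * n)) = c := fun c => by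
    simp [ZMod.natCast_val, ZMod.cast_id]
  have key : ∀ x y : ZMod (2 * n), a.coeff (.sr (y - x)) = a.coeff (.sr (y + x)) := by
    intro x y
    have := h (.r x) (.sr y)
    rwa [r_mul_sr, sr_mul_r] at this
  have key2 : ∀ x y : ZMod (2 * n), a.coeff (.r (y - x)) = a.coeff (.r (x - y)) := by
    intro x y
    have := h (.sr x) (.sr y)
    rwa [sr_mul_sr, sr_mul_sr] at this
  rcases g with i | i
  · have hmin : min i.val (2 * n - i.val) ≤ n := by omega
    rw [dInd, dRep, if_neg (by simpa using by omega), if_neg (by simpa using by omega)]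
    rcases le_or_gt i.val (2 * n - i.val) with hle | hlt
    · simp only [min_eq_left hle]
      rw [hcast]
    · simp only [min_eq_right hlt.le]
      have h1 : i.val ≤ 2 * n := (ZMod.val_lt i).le
      have hic : ((2 * n - i.val : ℕ) : ZMod (2 * n)) = -i := by
        rw [Nat.cast_sub h1]
        simp [hcast]
      rw [hic]
      have := key2 i 0
      simpa using this
  · rw [dInd]
    set q : ZMod (2 * n) := ((i.val / 2 : ℕ) : ZMod (2 * n)) with hq
    set b : ℕ := i.val % 2 with hb
    have hsr : a.coeff (.sr ((b : ℕ) : ZMod (2 * n))) = a.coeff (.sr i) := by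
      have k := key q (q + ((b : ℕ) : ZMod (2 * n)))
      rw [add_sub_cancel_left] at k
      rw [k]
      congr 1
      rw [← hcast i]
      have : i.val = 2 * (i.val / 2) + b := by omega
      rw [this]
      push_cast
      rw [hq]
      ring
    by_cases hb0 : i.val % 2 = 0
    · rw [if_pos hb0, dRep, if_pos rfl]
      rw [← hsr]
      congr 2
      simp [hb, hb0]
    · rw [if_neg hb0, dRep, if_neg (by simp), if_pos rfl]
      rw [← hsr]
      congr 2
      have : b = 1 := by omega
      simp [this]

/-- The kernel of the adjoint map is linearly equivalent to functions on conjugacy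
classes of the dihedral group. -/
noncomputable def kerEquiv (n : ℕ) [NeZero n] (F : Type) [Field F] :
    LinearMap.ker (adMap F (DihedralGroup (2 * n))) ≃ₗ[F] (Fin (n + 3) → F) where
  toFun a := fun j => (a : MonoidAlgebra F (DihedralGroup (2 * n))).coeff (dRep n j)
  map_add' a b := by
    funext j
    exact Finsupp.add_apply _ _ _
  map_smul' c a := by
    funext j
    rw [RingHom.id_apply]
    exact Finsupp.smul_apply _ _ _
  invFun f := ⟨MonoidAlgebra.ofCoeff (Finsupp.equivFunOnFinite.symm (fun g => f (dInd n g))), by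
    rw [mem_ker_adMap]
    intro x y
    simp only [MonoidAlgebra.coeff_ofCoeff, Finsupp.coe_equivFunOnFinite_symm]
    rw [dInd_mul_comm]⟩
  left_inv a := by
    apply Subtype.ext
    apply MonoidAlgebra.ext
    apply Finsupp.ext
    intro g
    simp only [MonoidAlgebra.coeff_ofCoeff, Finsupp.coe_equivFunOnFinite_symm]
    exact a_rep_ind _ ((mem_ker_adMap F (DihedralGroup (2 * n)) _).mp a.2) g
  right_inv f := by
    funext j
    simp only [MonoidAlgebra.coeff_ofCoeff, Finsupp.coe_equivFunOnFinite_symm, dInd_dRep]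

lemma finrank_ker_adMap (n : ℕ) [NeZero n] (F : Type) [Field F] :
    Module.finrank F (LinearMap.ker (adMap F (DihedralGroup (2 * n)))) = n + 3 := by
  rw [(kerEquiv n F).finrank_eq, Module.finrank_pi, Fintype.card_fin]

/-- For the finite field `F` with `2^m` elements and the dihedral group `D_{2n}` of order
`4n`, the space of inner derivations of `F[D_{2n}]` has dimension `3n − 3`. -/
theorem innDer_finrank_dihedral
    (n m : ℕ) (hn : 0 < n) (hm : 0 < m)
    (F : Type) [Field F] [Fintype F] (hF : Fintype.card F = 2 ^ m) :
    Module.finrank F ↥(innDer F (DihedralGroup (2 * n))) = 3 * n - 3 := by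
  haveI : NeZero n := ⟨hn.ne'⟩
  rw [innDer_eq_range]
  haveI : Module.Finite F (MonoidAlgebra F (DihedralGroup (2 * n))) :=
    Module.Finite.equiv ((MonoidAlgebra.coeffLinearEquiv F).trans (Finsupp.linearEquivFunOnFinite F F (DihedralGroup (2 * n)))).symm
  have h1 := LinearMap.finrank_range_add_finrank_ker (adMap F (DihedralGroup (2 * n)))
  have h2 : Module.finrank F (MonoidAlgebra F (DihedralGroup (2 * n))) = 4 * n := by
    have e : Module.finrank F (MonoidAlgebra F (DihedralGroup (2 * n))) =
        Module.finrank F (DihedralGroup (2 * n) → F) :=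
      LinearEquiv.finrank_eq ((MonoidAlgebra.coeffLinearEquiv F).trans (Finsupp.linearEquivFunOnFinite F F (DihedralGroup (2 * n))))
    rw [e, Module.finrank_pi, DihedralGroup.card]
    ring
  have h3 := finrank_ker_adMap n F
  rw [h2, h3] at h1
  omega
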